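/- The Ihara composition F ∘ G := G(e0, F e1 F^{-1})·F on invertible formal power series in R⟨⟨e0,e1⟩⟩ with constant term 1 is associative: (F ∘ G) ∘ H = F ∘ (G ∘ H). -/

import Mathlib

/-!
Noncommutative formal power series `R⟨⟨e0,e1⟩⟩` are modeled as coefficient
functions on words: `List (Fin 2) → R` (letter `0` is `e0`, letter `1` is
`e1`).  `cmul` is the Cauchy (concatenation) product, `oneS` the unit series.
-/

set_option linter.unusedSectionVars false
set_option linter.unusedVariables false
set_option linter.unusedTactic false
variable (R : Type*) [CommRing R] [Algebra ℚ R]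

/-- Cauchy product of noncommutative power series. -/
noncomputable def cmul (F G : List (Fin 2) → R) : List (Fin 2) → R :=
  fun w => ∑ i ∈ Finset.range (w.length + 1), F (w.take i) * G (w.drop i)

/-- The unit series `1`. -/
def oneS : List (Fin 2) → R := fun w => if w = [] then 1 else 0

/-- The series consisting of the single monomial `u`. -/
def wordS (u : List (Fin 2)) : List (Fin 2) → R := fun w => if w = u then 1 else 0

/-- Image of the monomial `u` under the substitution `e0 ↦ e0`, `e1 ↦ X`. -/
noncomputable def monImg (X : List (Fin 2) → R) : List (Fin 2) → (List (Fin 2) → R)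
  | [] => oneS R
  | a :: u => cmul R (if a = 1 then X else wordS R [0]) (monImg X u)

/-- The finset of words of length ≤ n over the alphabet {e0,e1}. -/
noncomputable def wordsLe (n : ℕ) : Finset (List (Fin 2)) :=
  (Finset.range (n + 1)).biUnion fun k =>
    (Finset.univ : Finset (Fin k → Fin 2)).image List.ofFn

/-- Substitution `G(e0, X)` of a series `X` for `e1` in `G` (the coefficient
of a word `w` only involves monomials of `G` of length ≤ |w|, since `X` is
substituted only in positions where it contributes at least one letter when
`X` has no constant term, as is the case for `F e1 F⁻¹`). -/
noncomputable def subst (G X : List (Fin 2) → R) : List (Fin 2) → R :=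
  fun w => ∑ u ∈ wordsLe w.length, G u * monImg R X u w

/-- `F e1 F⁻¹`, where `Fi` is the inverse of `F`. -/
noncomputable def conjE1 (F Fi : List (Fin 2) → R) : List (Fin 2) → R :=
  cmul R (cmul R F (wordS R [1])) Fi

/-- The Ihara composition `F ∘ G = G(e0, F e1 F⁻¹) · F`, where `Fi = F⁻¹`. -/
noncomputable def ihara (F Fi G : List (Fin 2) → R) : List (Fin 2) → R :=
  cmul R (subst R G (conjE1 R F Fi)) F

/-- Associativity of the Ihara composition `F ∘ G = G(e0, F e1 F⁻¹)·F` on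
invertible series with constant term 1: `(F ∘ G) ∘ H = F ∘ (G ∘ H)`.
Inverses are supplied explicitly (`Fi = F⁻¹`, etc.), and `K = F ∘ G`. -/
/- ### basic lemmas -/

lemma cmul_nil (A B : List (Fin 2) → R) : cmul R A B [] = A [] * B [] := by
  simp [cmul]

lemma cmul_cons (A B : List (Fin 2) → R) (a : Fin 2) (w : List (Fin 2)) :
    cmul R A B (a :: w) = A [] * B (a :: w) + cmul R (fun u => A (a :: u)) B w := by
  rw [cmul, cmul, List.length_cons, Finset.sum_range_succ']
  simp [add_comm]

lemma cmul_oneS_left (A : List (Fin 2) → R) : cmul R (oneS R) A = A := by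
  funext w
  rw [cmul]
  rw [Finset.sum_eq_single 0]
  · simp [oneS]
  · intro i hmem hne
    simp only [Finset.mem_range] at hmem
    have hw : w.take i ≠ [] := by
      intro h
      have := congrArg List.length h
      simp at this
      rcases this with h' | h'
      · omega
      · subst h'; simp at hmem; omega
    simp [oneS, hw]
  · intro h; simp at h

lemma cmul_oneS_right (A : List (Fin 2) → R) : cmul R A (oneS R) = A := by
  funext w
  rw [cmul]
  rw [Finset.sum_eq_single w.length]
  · simp [oneS]
  · intro i hi hne
    simp only [Finset.mem_range] at hi
    have hlt : i < w.length := lt_of_le_of_ne (by omega) hne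
    have : w.drop i ≠ [] := by
      intro h
      have := (List.length_drop : (w.drop i).length = w.length - i) ▸ congrArg List.length h
      simp at this; omega
    simp [oneS, this]
  · intro h; simp at h

lemma cmul_linear (B D C : List (Fin 2) → R) (x : R) (w : List (Fin 2)) :
    cmul R (fun u => x * B u + D u) C w = x * cmul R B C w + cmul R D C w := by
  simp only [cmul, Finset.mul_sum, ← Finset.sum_add_distrib]
  exact Finset.sum_congr rfl fun i _ => by ring

lemma cmul_assoc (A B C : List (Fin 2) → R) :
    cmul R (cmul R A B) C = cmul R A (cmul R B C) := by
  funext w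
  induction w generalizing A with
  | nil => simp [cmul_nil, mul_assoc]
  | cons a w ih =>
    rw [cmul_cons, cmul_cons, cmul_nil, cmul_cons]
    have h1 : (fun u => cmul R A B (a :: u)) =
        fun u => A [] * B (a :: u) + cmul R (fun v => A (a :: v)) B u := by
      funext u; rw [cmul_cons]
    rw [h1, cmul_linear, ih]
    ring

lemma mem_wordsLe (u : List (Fin 2)) (n : ℕ) : u ∈ wordsLe n ↔ u.length ≤ n := by
  simp only [wordsLe, Finset.mem_biUnion, Finset.mem_range, Finset.mem_image,
    Finset.mem_univ, true_and]
  constructor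
  · rintro ⟨k, hk, f, rfl⟩
    simp; omega
  · intro h
    exact ⟨u.length, by omega, u.get, List.ofFn_get u⟩

lemma monImg_eq_zero (X : List (Fin 2) → R) (hX : X [] = 0) :
    ∀ u w : List (Fin 2), w.length < u.length → monImg R X u w = 0 := by
  intro u
  induction u with
  | nil => intro w h; simp at h
  | cons a u ih =>
    intro w h
    rw [monImg, cmul]
    apply Finset.sum_eq_zero
    intro i hi
    simp only [Finset.mem_range] at hi
    rcases Nat.eq_zero_or_pos i with h0 | h0
    · subst h0
      simp only [List.take_zero]
      have : (if a = 1 then X else wordS R [0]) [] = 0 := by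
        split <;> simp [wordS, hX]
      rw [this, zero_mul]
    · rw [ih (w.drop i) (by simp at h ⊢; omega), mul_zero]

lemma monImg_append (X : List (Fin 2) → R) (u v : List (Fin 2)) :
    monImg R X (u ++ v) = cmul R (monImg R X u) (monImg R X v) := by
  induction u with
  | nil => rw [List.nil_append, monImg, cmul_oneS_left]
  | cons a u ih => rw [List.cons_append, monImg, monImg, ih, cmul_assoc]

lemma subst_extend (G X : List (Fin 2) → R) (hX : X [] = 0) (w : List (Fin 2))
    (n : ℕ) (hn : w.length ≤ n) :
    subst R G X w = ∑ u ∈ wordsLe n, G u * monImg R X u w := by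
  rw [subst]
  apply Finset.sum_subset
  · intro u hu
    rw [mem_wordsLe] at hu ⊢; omega
  · intro u _ hu
    rw [mem_wordsLe] at hu
    rw [monImg_eq_zero R X hX u w (by omega), mul_zero]

lemma subst_oneS (X : List (Fin 2) → R) : subst R (oneS R) X = oneS R := by
  funext w
  rw [subst, Finset.sum_eq_single ([] : List (Fin 2))]
  · simp [oneS, monImg]
  · intro u _ hu; simp [oneS, hu]
  · intro h; simp [mem_wordsLe] at h

lemma subst_wordS0 (X : List (Fin 2) → R) : subst R (wordS R [0]) X = wordS R [0] := by
  funext w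
  rw [subst]
  have h1 : ∀ u ∈ wordsLe w.length,
      wordS R [0] u * monImg R X u w = if u = [0] then monImg R X u w else 0 := by
    intro u _; simp [wordS, ite_mul]
  rw [Finset.sum_congr rfl h1, Finset.sum_ite_eq' (wordsLe w.length) ([0] : List (Fin 2))]
  have h2 : monImg R X [0] w = wordS R [0] w := by
    have : monImg R X [0] = cmul R (wordS R [0]) (oneS R) := by
      rw [monImg, monImg]; norm_num
    rw [this, cmul_oneS_right]
  split
  · exact h2
  · rename_i h
    rw [mem_wordsLe] at h
    simp only [List.length_cons, List.length_nil] at h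
    have : w = [] := by
      rcases w with _ | _
      · rfl
      · simp at h
    subst this
    simp [wordS]

lemma subst_wordS1 (X : List (Fin 2) → R) (hX : X [] = 0) :
    subst R (wordS R [1]) X = X := by
  funext w
  rw [subst]
  have h1 : ∀ u ∈ wordsLe w.length,
      wordS R [1] u * monImg R X u w = if u = [1] then monImg R X u w else 0 := by
    intro u _; simp [wordS, ite_mul]
  rw [Finset.sum_congr rfl h1, Finset.sum_ite_eq' (wordsLe w.length) ([1] : List (Fin 2))]
  have h2 : monImg R X [1] w = X w := by
    have : monImg R X [1] = cmul R X (oneS R) := by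
      rw [monImg, monImg]; norm_num
    rw [this, cmul_oneS_right]
  split
  · exact h2
  · rename_i h
    rw [mem_wordsLe] at h
    simp only [List.length_cons, List.length_nil] at h
    have : w = [] := by
      rcases w with _ | _
      · rfl
      · simp at h
    subst this
    rw [hX]

lemma subst_cmul (A B X : List (Fin 2) → R) (hX : X [] = 0) :
    subst R (cmul R A B) X = cmul R (subst R A X) (subst R B X) := by
  funext w
  set n := w.length with hn
  -- RHS as a sum over pairs
  have hR : cmul R (subst R A X) (subst R B X) w
      = ∑ p ∈ (wordsLe n) ×ˢ (wordsLe n),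
          A p.1 * B p.2 * monImg R X (p.1 ++ p.2) w := by
    rw [cmul]
    have step : ∀ i ∈ Finset.range (n + 1),
        subst R A X (w.take i) * subst R B X (w.drop i)
        = ∑ p ∈ (wordsLe n) ×ˢ (wordsLe n),
            A p.1 * monImg R X p.1 (w.take i) * (B p.2 * monImg R X p.2 (w.drop i)) := by
      intro i hi
      rw [subst_extend R A X hX _ n (by rw [List.length_take]; omega),
          subst_extend R B X hX _ n (by rw [List.length_drop]; omega),
          Finset.sum_mul_sum, ← Finset.sum_product']
    rw [Finset.sum_congr rfl step, Finset.sum_comm]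
    apply Finset.sum_congr rfl
    intro p _
    have : ∀ i ∈ Finset.range (n + 1),
        A p.1 * monImg R X p.1 (w.take i) * (B p.2 * monImg R X p.2 (w.drop i))
        = A p.1 * B p.2 * (monImg R X p.1 (w.take i) * monImg R X p.2 (w.drop i)) := by
      intro i _; ring
    rw [Finset.sum_congr rfl this, ← Finset.mul_sum, monImg_append]
    rfl
  -- restrict to pairs with small total length
  have hR2 : (∑ p ∈ (wordsLe n) ×ˢ (wordsLe n),
          A p.1 * B p.2 * monImg R X (p.1 ++ p.2) w)
      = ∑ p ∈ ((wordsLe n) ×ˢ (wordsLe n)).filter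
          (fun p => p.1.length + p.2.length ≤ n),
          A p.1 * B p.2 * monImg R X (p.1 ++ p.2) w := by
    rw [Finset.sum_filter_of_ne]
    intro p _ hne
    by_contra hlen
    apply hne
    rw [monImg_eq_zero R X hX _ w (by rw [List.length_append]; omega), mul_zero]
  -- LHS as a sum over a sigma set
  have hL : subst R (cmul R A B) X w
      = ∑ q ∈ (wordsLe n).sigma (fun u => Finset.range (u.length + 1)),
          A (q.1.take q.2) * B (q.1.drop q.2) * monImg R X q.1 w := by
    rw [subst, Finset.sum_sigma]
    apply Finset.sum_congr rfl
    intro u _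
    rw [cmul, Finset.sum_mul]
  rw [hL, hR, hR2]
  apply Finset.sum_nbij' (i := fun q => (q.1.take q.2, q.1.drop q.2))
    (j := fun p => ⟨p.1 ++ p.2, p.1.length⟩)
  · rintro ⟨u, i⟩ hq
    simp only [Finset.mem_sigma, Finset.mem_range, mem_wordsLe] at hq
    simp only [Finset.mem_filter, Finset.mem_product, mem_wordsLe,
      List.length_take, List.length_drop]
    omega
  · rintro ⟨u1, u2⟩ hp
    simp only [Finset.mem_filter, Finset.mem_product, mem_wordsLe] at hp
    simp only [Finset.mem_sigma, Finset.mem_range, mem_wordsLe, List.length_append]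
    omega
  · rintro ⟨u, i⟩ hq
    simp only [Finset.mem_sigma, Finset.mem_range] at hq
    have h1 : u.take i ++ u.drop i = u := List.take_append_drop i u
    have h2 : (u.take i).length = i := List.length_take_of_le (by omega)
    exact Sigma.ext h1 (heq_of_eq (by rw [h2]))
  · rintro ⟨u1, u2⟩ _
    exact Prod.ext (List.take_left : List.take u1.length (u1 ++ u2) = u1) (List.drop_left : List.drop u1.length (u1 ++ u2) = u2)
  · rintro ⟨u, i⟩ _
    simp only
    rw [List.take_append_drop]

lemma subst_monImg (Y X : List (Fin 2) → R) (hX : X [] = 0) (v : List (Fin 2)) :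
    subst R (monImg R Y v) X = monImg R (subst R Y X) v := by
  induction v with
  | nil => rw [monImg, monImg, subst_oneS]
  | cons a v ih =>
    rw [monImg, monImg, subst_cmul R _ _ _ hX, ih]
    congr 1
    by_cases h : a = 1
    · simp [h]
    · simp only [if_neg h, subst_wordS0]

lemma subst_subst (H Y X : List (Fin 2) → R) (hX : X [] = 0) (hY : Y [] = 0) :
    subst R (subst R H Y) X = subst R H (subst R Y X) := by
  funext w
  set n := w.length with hn
  have h1 : ∀ u ∈ wordsLe n,
      subst R H Y u * monImg R X u w
      = ∑ v ∈ wordsLe n, H v * monImg R Y v u * monImg R X u w := by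
    intro u hu
    rw [mem_wordsLe] at hu
    rw [subst_extend R H Y hY u n hu, Finset.sum_mul]
  rw [subst, Finset.sum_congr rfl h1, Finset.sum_comm]
  rw [subst]
  apply Finset.sum_congr rfl
  intro v _
  have h2 : ∀ u ∈ wordsLe n,
      H v * monImg R Y v u * monImg R X u w
      = H v * (monImg R Y v u * monImg R X u w) := fun u _ => mul_assoc _ _ _
  rw [Finset.sum_congr rfl h2, ← Finset.mul_sum]
  congr 1
  have h3 : monImg R (subst R Y X) v w = subst R (monImg R Y v) X w :=
    (congrFun (subst_monImg R Y X hX v) w).symm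
  rw [h3, subst]

lemma conjE1_nil (F Fi : List (Fin 2) → R) : conjE1 R F Fi [] = 0 := by
  simp [conjE1, cmul_nil, wordS]

lemma subst_conjE1 (G Gi X : List (Fin 2) → R) (hX : X [] = 0) :
    subst R (conjE1 R G Gi) X = cmul R (cmul R (subst R G X) X) (subst R Gi X) := by
  rw [conjE1, subst_cmul R _ _ _ hX, subst_cmul R _ _ _ hX, subst_wordS1 R X hX]

theorem ihara_assoc (F Fi G Gi H K Ki : List (Fin 2) → R)
    (hF1 : F [] = 1) (hG1 : G [] = 1) (hH1 : H [] = 1)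
    (hF : cmul R F Fi = oneS R ∧ cmul R Fi F = oneS R)
    (hG : cmul R G Gi = oneS R ∧ cmul R Gi G = oneS R)
    (hK : K = ihara R F Fi G)
    (hKi : cmul R K Ki = oneS R ∧ cmul R Ki K = oneS R) :
    ihara R K Ki H = ihara R F Fi (ihara R G Gi H) := by
  set X := conjE1 R F Fi with hXdef
  set Y := conjE1 R G Gi with hYdef
  have hX0 : X [] = 0 := conjE1_nil R F Fi
  have hY0 : Y [] = 0 := conjE1_nil R G Gi
  set Ki' := cmul R Fi (subst R Gi X) with hKi'def
  have hKK' : cmul R K Ki' = oneS R := by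
    rw [hK, ihara, hKi'def, ← hXdef, cmul_assoc, ← cmul_assoc R F Fi, hF.1, cmul_oneS_left,
      ← subst_cmul R _ _ _ hX0, hG.1, subst_oneS]
  have hKi'eq : Ki = Ki' := by
    have h1 : cmul R Ki (cmul R K Ki') = Ki := by rw [hKK', cmul_oneS_right]
    have h2 : cmul R Ki (cmul R K Ki') = Ki' := by
      rw [← cmul_assoc, hKi.2, cmul_oneS_left]
    rw [← h1, h2]
  have hXeq : cmul R (cmul R F (wordS R [1])) Fi = X := by rw [hXdef, conjE1]
  have hconj : conjE1 R K Ki = subst R Y X := by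
    rw [subst_conjE1 R G Gi X hX0, conjE1, hKi'eq, hKi'def, hK, ihara, ← hXdef]
    rw [cmul_assoc R (subst R G X) F (wordS R [1])]
    rw [cmul_assoc R (subst R G X) (cmul R F (wordS R [1])) (cmul R Fi (subst R Gi X))]
    rw [← cmul_assoc R (cmul R F (wordS R [1])) Fi (subst R Gi X)]
    rw [← cmul_assoc R (subst R G X) (cmul R (cmul R F (wordS R [1])) Fi) (subst R Gi X)]
    rw [hXeq]
  rw [ihara, hconj, hK, ihara, ← hXdef]
  rw [ihara, ihara, ← hYdef, ← hXdef]
  rw [← subst_subst R H Y X hX0 hY0]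
  rw [subst_cmul R (subst R H Y) G X hX0]
  rw [cmul_assoc R (subst R (subst R H Y) X) (subst R G X) F]
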